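/- (Net for compressible vectors) For a, b ∈ (0, 1/8), the set Comp_N(a,b) of unit vectors in ℂ^N within Euclidean distance b of some vector supported on at most aN coordinates admits a 2b-net (in Euclidean metric) of cardinality at most (C/(ab))^{2aN}, where C is an absolute constant. -/

import Mathlib

open MeasureTheory ProbabilityTheory

noncomputable def euclNorm {ι : Type*} [Fintype ι] (v : ι → ℂ) : ℝ :=
  Real.sqrt (∑ i, ‖v i‖ ^ 2)

noncomputable def opNorm {ι κ : Type*} [Fintype ι] [Fintype κ] (A : Matrix ι κ ℂ) : ℝ :=
  sSup ((fun v => euclNorm (A.mulVec v)) '' {v | euclNorm v ≤ 1})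

noncomputable def sMin {ι κ : Type*} [Fintype ι] [Fintype κ] (A : Matrix ι κ ℂ) : ℝ :=
  sInf ((fun v => euclNorm (A.mulVec v)) '' {v | euclNorm v = 1})

/-- The `Mn × Mn` cyclic block linearization matrix with `X k` in block `(k, k+1)`
(indices mod `M`). -/
def cyclicY (M n : ℕ) (X : Fin M → Matrix (Fin n) (Fin n) ℂ) :
    Matrix (Fin M × Fin n) (Fin M × Fin n) ℂ :=
  fun p q => if q.1.val = (p.1.val + 1) % M then X p.1 p.2 q.2 else 0

/-- The translated linearization `Y(z) = Y - z I`. -/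
noncomputable def Ymat (M n : ℕ) (X : Fin M → Matrix (Fin n) (Fin n) ℂ) (z : ℂ) :
    Matrix (Fin M × Fin n) (Fin M × Fin n) ℂ :=
  cyclicY M n X - z • (1 : Matrix (Fin M × Fin n) (Fin M × Fin n) ℂ)

def sparseSet {ι : Type*} [Fintype ι] (a : ℝ) : Set (ι → ℂ) :=
  {x | ∃ s : Finset ι, (∀ i ∉ s, x i = 0) ∧ (s.card : ℝ) ≤ a * (Fintype.card ι)}

noncomputable def compSet {ι : Type*} [Fintype ι] (a b : ℝ) : Set (ι → ℂ) :=
  {x | euclNorm x = 1 ∧ ∃ y ∈ sparseSet a, euclNorm (x - y) ≤ b}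

noncomputable def incompSet {ι : Type*} [Fintype ι] (a b : ℝ) : Set (ι → ℂ) :=
  {x | euclNorm x = 1 ∧ x ∉ compSet a b}

noncomputable def distToSpan {ι : Type*} [Fintype ι] (x : ι → ℂ) (S : Set (ι → ℂ)) : ℝ :=
  sInf ((fun y => euclNorm (x - y)) '' (Submodule.span ℂ S : Set (ι → ℂ)))

open Metric Set
open scoped ENNReal NNReal


lemma euclNorm_eq_norm {ι : Type*} [Fintype ι] (v : ι → ℂ) :
    euclNorm v = ‖(WithLp.equiv 2 (ι → ℂ)).symm v‖ := by
  rw [euclNorm, EuclideanSpace.norm_eq]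
  rfl

lemma euclNorm_nonneg {ι : Type*} [Fintype ι] (v : ι → ℂ) : 0 ≤ euclNorm v :=
  Real.sqrt_nonneg _

lemma euclNorm_sq {ι : Type*} [Fintype ι] (v : ι → ℂ) :
    euclNorm v ^ 2 = ∑ i, ‖v i‖ ^ 2 := by
  rw [euclNorm, Real.sq_sqrt]
  positivity

lemma euclNorm_triangle {ι : Type*} [Fintype ι] (x y z : ι → ℂ) :
    euclNorm (x - z) ≤ euclNorm (x - y) + euclNorm (y - z) := by
  simp only [euclNorm_eq_norm]
  change ‖(WithLp.equiv 2 (ι → ℂ)).symm x - (WithLp.equiv 2 (ι → ℂ)).symm z‖ ≤ ‖(WithLp.equiv 2 (ι → ℂ)).symm x - (WithLp.equiv 2 (ι → ℂ)).symm y‖ + ‖(WithLp.equiv 2 (ι → ℂ)).symm y - (WithLp.equiv 2 (ι → ℂ)).symm z‖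
  have : (WithLp.equiv 2 (ι → ℂ)).symm x - (WithLp.equiv 2 (ι → ℂ)).symm z
      = ((WithLp.equiv 2 (ι → ℂ)).symm x - (WithLp.equiv 2 (ι → ℂ)).symm y)
        + ((WithLp.equiv 2 (ι → ℂ)).symm y - (WithLp.equiv 2 (ι → ℂ)).symm z) := by abel
  rw [this]
  exact norm_add_le _ _

lemma pow_le_three_pow_mul_factorial (k : ℕ) : (k : ℝ) ^ k ≤ 3 ^ k * k.factorial := by
  have h1 : ((k:ℝ)) ^ k / k.factorial ≤ Real.exp k := by
    calc ((k:ℝ)) ^ k / k.factorial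
        ≤ ∑ i ∈ Finset.range (k+1), (k:ℝ) ^ i / i.factorial := by
          refine Finset.single_le_sum (f := fun i => (k:ℝ)^i / i.factorial) ?_ ?_
          · intro i _; positivity
          · simp
      _ ≤ Real.exp k := Real.sum_le_exp_of_nonneg (by positivity) _
  have h2 : Real.exp (k:ℝ) ≤ 3 ^ k := by
    have : Real.exp ((k:ℝ) * 1) = Real.exp 1 ^ k := Real.exp_nat_mul 1 k
    rw [mul_one] at this
    rw [this]
    exact pow_le_pow_left₀ (Real.exp_pos 1).le
      (le_trans Real.exp_one_lt_d9.le (by norm_num)) k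
  have h3 : (0:ℝ) < k.factorial := by positivity
  rw [div_le_iff₀ h3] at h1
  calc (k:ℝ)^k ≤ Real.exp k * k.factorial := h1
    _ ≤ 3 ^ k * k.factorial := by
        apply mul_le_mul_of_nonneg_right h2 h3.le

noncomputable def embVec {N k : ℕ} (t : Finset (Fin N)) (ht : t.card = k)
    (u : EuclideanSpace ℂ (Fin k)) : Fin N → ℂ :=
  fun i => if h : i ∈ t then u ((t.orderIsoOfFin ht).toEquiv.symm ⟨i, h⟩) else 0

lemma embVec_sub {N k : ℕ} (t : Finset (Fin N)) (ht : t.card = k)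
    (u v : EuclideanSpace ℂ (Fin k)) :
    embVec t ht u - embVec t ht v = embVec t ht (u - v) := by
  funext i
  simp only [embVec, Pi.sub_apply]
  by_cases h : i ∈ t
  · simp only [dif_pos h]
    rfl
  · simp [h]

lemma sum_embVec {N k : ℕ} (t : Finset (Fin N)) (ht : t.card = k)
    (u : EuclideanSpace ℂ (Fin k)) :
    ∑ i, ‖embVec t ht u i‖ ^ 2 = ∑ j, ‖u j‖ ^ 2 := by
  set e := (t.orderIsoOfFin ht).toEquiv with he
  have h0 : ∀ i ∉ t, ‖embVec t ht u i‖ ^ 2 = 0 := by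
    intro i hi
    simp [embVec, hi]
  have key : ∀ x : t, ‖embVec t ht u ↑x‖ ^ 2 = ‖u (e.symm x)‖ ^ 2 := by
    intro x
    simp only [embVec, dif_pos x.2, he, Subtype.coe_eta]
  calc ∑ i, ‖embVec t ht u i‖ ^ 2
      = ∑ i ∈ t, ‖embVec t ht u i‖ ^ 2 :=
        (Finset.sum_subset (Finset.subset_univ t) (fun i _ hi => h0 i hi)).symm
    _ = ∑ x : t, ‖embVec t ht u ↑x‖ ^ 2 :=
        (Finset.sum_coe_sort t (fun i => ‖embVec t ht u i‖ ^ 2)).symm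
    _ = ∑ x : t, ‖u (e.symm x)‖ ^ 2 := Finset.sum_congr rfl (fun x _ => key x)
    _ = ∑ j, ‖u j‖ ^ 2 := by
        refine (Fintype.sum_equiv e _ _ ?_).symm
        intro j
        rw [Equiv.symm_apply_apply]

lemma euclNorm_embVec {N k : ℕ} (t : Finset (Fin N)) (ht : t.card = k)
    (u : EuclideanSpace ℂ (Fin k)) :
    euclNorm (embVec t ht u) = ‖u‖ := by
  rw [euclNorm, sum_embVec, EuclideanSpace.norm_eq]

lemma packing_card_le {E : Type*} [NormedAddCommGroup E] [NormedSpace ℝ E]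
    [FiniteDimensional ℝ E] [Nontrivial E]
    {ε : ℝ} (hε : 0 < ε) (hε1 : ε ≤ 1) (s : Finset E)
    (hS : ∀ x ∈ s, ‖x‖ ≤ 1)
    (hsep : (s : Set E).Pairwise (fun x y => ε ≤ dist x y)) :
    (s.card : ℝ) ≤ (4 / ε) ^ (Module.finrank ℝ E) := by
  borelize E
  set d := Module.finrank ℝ E
  set μ : Measure E := (Module.finBasis ℝ E).addHaar
  have hdisj : (s : Set E).PairwiseDisjoint (fun p => ball p (ε / 2)) := by
    intro x hx y hy hxy
    apply ball_disjoint_ball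
    rw [dist_eq_norm] at *
    have := hsep hx hy hxy
    linarith [dist_eq_norm x y, this]
  have hsub : ∀ p ∈ s, ball p (ε / 2) ⊆ ball (0 : E) 2 := by
    intro p hp z hz
    simp only [mem_ball, dist_zero_right] at *
    calc ‖z‖ ≤ ‖z - p‖ + ‖p‖ := by
          simpa using norm_add_le (z - p) p
      _ < 2 := by
          have := hS p hp
          rw [dist_eq_norm] at hz
          linarith
  have hmeas : μ (⋃ p ∈ s, ball p (ε/2)) = ∑ p ∈ s, μ (ball p (ε/2)) :=
    measure_biUnion_finset hdisj (fun p _ => measurableSet_ball)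
  have hle : ∑ p ∈ s, μ (ball p (ε/2)) ≤ μ (ball (0:E) 2) := by
    rw [← hmeas]
    exact measure_mono (Set.iUnion₂_subset hsub)
  have hball : ∀ p : E, μ (ball p (ε/2)) = ENNReal.ofReal ((ε/2) ^ d) * μ (ball 0 1) :=
    fun p => Measure.addHaar_ball μ p (by linarith)
  have hball2 : μ (ball (0:E) 2) = ENNReal.ofReal ((2:ℝ) ^ d) * μ (ball 0 1) :=
    Measure.addHaar_ball μ 0 (by norm_num)
  simp only [hball, Finset.sum_const, nsmul_eq_mul, hball2] at hle
  rw [← mul_assoc] at hle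
  have hpos : μ (ball (0:E) 1) ≠ 0 := (measure_ball_pos μ 0 one_pos).ne'
  have hfin : μ (ball (0:E) 1) ≠ ⊤ := measure_ball_lt_top.ne
  rw [ENNReal.mul_le_mul_iff_left hpos hfin] at hle
  have h1 : (s.card : ℝ≥0∞) * ENNReal.ofReal ((ε/2)^d) = ENNReal.ofReal (s.card * (ε/2)^d) := by
    rw [ENNReal.ofReal_mul (by positivity), ENNReal.ofReal_natCast]
  rw [h1] at hle
  have h2 : (s.card : ℝ) * (ε/2)^d ≤ 2^d := by
    have := (ENNReal.ofReal_le_ofReal_iff (by positivity)).mp hle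
    exact this
  have hεd : (0:ℝ) < (ε/2)^d := by positivity
  rw [div_pow, le_div_iff₀ (by positivity)]
  have e1 : (ε/2)^d * 2^d = ε^d := by rw [← mul_pow]; norm_num
  have e2 : (2:ℝ)^d * 2^d = 4^d := by rw [← mul_pow]; norm_num
  nlinarith [mul_le_mul_of_nonneg_right h2 (by positivity : (0:ℝ) ≤ 2^d)]

lemma exists_net {E : Type*} [NormedAddCommGroup E] [NormedSpace ℝ E]
    [FiniteDimensional ℝ E] [Nontrivial E]
    {ε : ℝ} (hε : 0 < ε) (hε1 : ε ≤ 1) {K : Set E} (hK : ∀ x ∈ K, ‖x‖ ≤ 1) :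
    ∃ T : Set E, T ⊆ K ∧ T.Finite ∧ (T.ncard : ℝ) ≤ (4 / ε) ^ (Module.finrank ℝ E) ∧
      ∀ x ∈ K, ∃ y ∈ T, dist x y ≤ ε := by
  set d := Module.finrank ℝ E
  set 𝒮 : Set (Set E) := {S | S ⊆ K ∧ S.Pairwise (fun x y => ε ≤ dist x y)} with h𝒮
  have hchainub : ∀ c ⊆ 𝒮, IsChain (fun x1 x2 => x1 ⊆ x2) c → c.Nonempty →
      ∃ ub ∈ 𝒮, ∀ s ∈ c, s ⊆ ub := by
    intro c hc hchain _
    refine ⟨⋃₀ c, ⟨?_, ?_⟩, fun s hs => subset_sUnion_of_mem hs⟩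
    · exact sUnion_subset fun s hs => (hc hs).1
    · intro x hx y hy hxy
      obtain ⟨s1, hs1, hxs⟩ := hx
      obtain ⟨s2, hs2, hys⟩ := hy
      rcases hchain.total hs1 hs2 with h | h
      · exact (hc hs2).2 (h hxs) hys hxy
      · exact (hc hs1).2 hxs (h hys) hxy
  obtain ⟨M, -, hM⟩ := zorn_subset_nonempty 𝒮 hchainub ∅ ⟨empty_subset _, Set.pairwise_empty _⟩
  obtain ⟨hMK, hMsep⟩ := hM.prop
  -- every finite subset has the card bound
  have hfinsub : ∀ t : Finset E, ↑t ⊆ M → (t.card : ℝ) ≤ (4/ε)^d := by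
    intro t ht
    exact packing_card_le hε hε1 t (fun x hx => hK x (hMK (ht hx)))
      (hMsep.mono ht)
  have hMfin : M.Finite := by
    by_contra hinf
    obtain ⟨t, htM, htc⟩ := Set.Infinite.exists_subset_card_eq hinf (⌈(4/ε)^d⌉₊ + 1)
    have h1 := hfinsub t htM
    rw [htc] at h1
    have h2 : ((4:ℝ)/ε)^d ≤ ⌈(4/ε)^d⌉₊ := Nat.le_ceil _
    push_cast at h1
    linarith
  refine ⟨M, hMK, hMfin, ?_, ?_⟩
  · have := hfinsub hMfin.toFinset (by simp)
    rwa [← Set.ncard_coe_finset, hMfin.coe_toFinset] at this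
  · intro x hxK
    by_contra hno
    push_neg at hno
    have hxM : x ∉ M := fun h => absurd (hno x h) (by simp [hε.le])
    have : insert x M ∈ 𝒮 := by
      constructor
      · exact insert_subset hxK hMK
      · haveI : Std.Symm (fun x y : E => ε ≤ dist x y) := ⟨fun u v h => by rwa [dist_comm]⟩
        rw [Set.pairwise_insert_of_symm]
        exact ⟨hMsep, fun y hy _ => (hno y hy).le⟩
    have := hM.eq_of_subset this (subset_insert x M)
    exact hxM (this ▸ mem_insert x M)

lemma le_of_sq_le_sq' {x c : ℝ} (hx : 0 ≤ x) (hc : 0 ≤ c) (h : x ^ 2 ≤ c ^ 2) : x ≤ c := by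
  nlinarith

lemma one_sub_le_of_sq' {n c : ℝ} (hn0 : 0 ≤ n) (hn1 : n ≤ 1) (h : 1 - c ≤ n ^ 2) :
    1 - n ≤ c := by
  nlinarith

lemma cover_aux {N k : ℕ} {b : ℝ} (hb : 0 < b) (hb8 : b < 1 / 8)
    (T : Set (EuclideanSpace ℂ (Fin k)))
    (hTnet : ∀ u ∈ {u : EuclideanSpace ℂ (Fin k) | ‖u‖ = 1}, ∃ y ∈ T, dist u y ≤ b / 2)
    (t : Finset (Fin N)) (htk : t.card = k)
    (x : Fin N → ℂ) (hx1 : euclNorm x = 1)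
    (hB : ∑ i ∈ tᶜ, ‖x i‖ ^ 2 ≤ b ^ 2) :
    ∃ m ∈ T, euclNorm (x - embVec t htk m) ≤ 2 * b := by
  classical
  set e := (t.orderIsoOfFin htk).toEquiv with he
  set w : EuclideanSpace ℂ (Fin k) :=
    (WithLp.equiv 2 (Fin k → ℂ)).symm (fun j => x ((e j : t) : Fin N)) with hw
  set y : Fin N → ℂ := fun i => if i ∈ t then x i else 0 with hy
  have hyw : embVec t htk w = y := by
    funext i
    by_cases h : i ∈ t
    · simp only [embVec, dif_pos h, hy, if_pos h, hw, he]
      rw [WithLp.equiv_symm_apply, PiLp.toLp_apply]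
      congr 1
      rw [Equiv.apply_symm_apply]
    · simp [embVec, h, hy]
  have hxsum : ∑ i, ‖x i‖ ^ 2 = 1 := by
    have h := euclNorm_sq x
    rw [hx1] at h
    linarith [h]
  have hysum : ∑ i, ‖y i‖ ^ 2 = ∑ i ∈ t, ‖x i‖ ^ 2 := by
    have h : ∀ i, ‖y i‖ ^ 2 = if i ∈ t then ‖x i‖ ^ 2 else 0 := by
      intro i
      by_cases hh : i ∈ t <;> simp [hy, hh]
    simp_rw [h]
    rw [Finset.sum_ite_mem, Finset.univ_inter]
  have hxysum : ∑ i, ‖(x - y) i‖ ^ 2 = ∑ i ∈ tᶜ, ‖x i‖ ^ 2 := by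
    have h : ∀ i, ‖(x - y) i‖ ^ 2 = if i ∈ tᶜ then ‖x i‖ ^ 2 else 0 := by
      intro i
      by_cases hh : i ∈ t <;> simp [hy, hh, Pi.sub_apply]
    simp_rw [h]
    rw [Finset.sum_ite_mem, Finset.univ_inter]
  have hsplit : (∑ i ∈ t, ‖x i‖ ^ 2) + (∑ i ∈ tᶜ, ‖x i‖ ^ 2) = 1 := by
    rw [Finset.sum_add_sum_compl]
    exact hxsum
  have hxyb : euclNorm (x - y) ≤ b := by
    have h1 : euclNorm (x - y) ^ 2 ≤ b ^ 2 := by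
      rw [euclNorm_sq, hxysum]
      exact hB
    exact le_of_sq_le_sq' (euclNorm_nonneg _) hb.le h1
  have hwA : ‖w‖ ^ 2 = ∑ i ∈ t, ‖x i‖ ^ 2 := by
    have h1 : euclNorm y = ‖w‖ := by rw [← hyw, euclNorm_embVec]
    rw [← h1, euclNorm_sq, hysum]
  have hBnn : (0:ℝ) ≤ ∑ i ∈ tᶜ, ‖x i‖ ^ 2 :=
    Finset.sum_nonneg fun i _ => by positivity
  have hw1 : ‖w‖ ≤ 1 := by
    refine le_of_sq_le_sq' (norm_nonneg w) zero_le_one ?_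
    rw [hwA, one_pow]
    linarith [hsplit, hBnn]
  have hwlb : 1 - ‖w‖ ≤ b ^ 2 := by
    refine one_sub_le_of_sq' (norm_nonneg w) hw1 ?_
    rw [hwA]
    linarith [hsplit, hB]
  have hwpos : 0 < ‖w‖ := by
    have hb2 : b ^ 2 < 1 := by nlinarith [hb, hb8]
    linarith [hwlb]
  have hwne : w ≠ 0 := fun h => by simp [h] at hwpos
  set wh : EuclideanSpace ℂ (Fin k) := ‖w‖⁻¹ • w with hwh
  have hwh1 : ‖wh‖ = 1 := norm_smul_inv_norm hwne
  obtain ⟨m, hmT, hm⟩ := hTnet wh hwh1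
  refine ⟨m, hmT, ?_⟩
  have d2 : euclNorm (y - embVec t htk wh) = 1 - ‖w‖ := by
    rw [← hyw, embVec_sub, euclNorm_embVec]
    have hsm : w - wh = (1 - ‖w‖⁻¹) • w := by
      rw [sub_smul, one_smul, hwh]
    rw [hsm, norm_smul, Real.norm_eq_abs]
    have hinv : 1 ≤ ‖w‖⁻¹ := (one_le_inv₀ hwpos).mpr hw1
    rw [abs_of_nonpos (by linarith), neg_sub, sub_mul,
      inv_mul_cancel₀ hwpos.ne', one_mul]
  have d3 : euclNorm (embVec t htk wh - embVec t htk m) ≤ b / 2 := by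
    rw [embVec_sub, euclNorm_embVec, ← dist_eq_norm]
    exact hm
  have t1 := euclNorm_triangle x y (embVec t htk m)
  have t2 := euclNorm_triangle y (embVec t htk wh) (embVec t htk m)
  rw [d2] at t2
  have hbb : b ^ 2 ≤ b / 2 := by nlinarith [hb, hb8]
  linarith [t1, t2, hxyb, d3, hwlb, hbb]

/-- The set of compressible unit vectors `Comp_N(a,b)` admits a `2b`-net of
cardinality at most `(C/(ab))^{2aN}`, for an absolute constant `C`. -/
theorem stmt9 :
    ∃ C : ℝ, 0 < C ∧
      ∀ (N : ℕ) (a b : ℝ), 0 < a → a < 1 / 8 → 0 < b → b < 1 / 8 →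
        ∃ 𝒩 : Set (Fin N → ℂ),
          𝒩 ⊆ compSet a b ∧ 𝒩.Finite ∧
          (𝒩.ncard : ℝ) ≤ (C / (a * b)) ^ (2 * a * (N : ℝ)) ∧
          ∀ x ∈ (compSet a b : Set (Fin N → ℂ)), ∃ y ∈ 𝒩, euclNorm (x - y) ≤ 2 * b := by
  classical
  refine ⟨8, by norm_num, ?_⟩
  intro N a b ha ha8 hb hb8
  set k := ⌊a * (N : ℝ)⌋₊ with hkdef
  by_cases hk0 : k = 0
  · -- compSet is empty
    refine ⟨∅, empty_subset _, finite_empty, ?_, ?_⟩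
    · simp only [Set.ncard_empty, Nat.cast_zero]
      exact Real.rpow_nonneg (by positivity) _
    · intro x hx
      exfalso
      obtain ⟨hx1, y', ⟨s, hs0, hscard⟩, hxy⟩ := hx
      have hscard' : (s.card : ℝ) ≤ a * N := by simpa using hscard
      have hsempty : s = ∅ := by
        rw [← Finset.card_eq_zero]
        by_contra hne
        have h1 : 1 ≤ s.card := Nat.one_le_iff_ne_zero.mpr hne
        have h2 : (1 : ℝ) ≤ a * N := le_trans (by exact_mod_cast h1) hscard'
        have h3 : 1 ≤ k := Nat.le_floor (by exact_mod_cast h2)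
        omega
      have hy0 : y' = 0 := funext fun i => hs0 i (by simp [hsempty])
      rw [hy0, sub_zero, hx1] at hxy
      linarith
  · have hk1 : 1 ≤ k := Nat.one_le_iff_ne_zero.mpr hk0
    have hN0 : 0 < N := by
      rcases Nat.eq_zero_or_pos N with h | h
      · subst h
        simp [hkdef] at hk0
      · exact h
    have hkaN : (k : ℝ) ≤ a * N := Nat.floor_le (by positivity)
    have haN2k : a * N ≤ 2 * k := by
      have := Nat.lt_floor_add_one (a * (N:ℝ))
      have hk1' : (1:ℝ) ≤ k := by exact_mod_cast hk1
      rw [← hkdef] at this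
      linarith
    have hkN : k < N := by
      have hNr : (0:ℝ) < N := by exact_mod_cast hN0
      have h1 : a * N < 1 * N := mul_lt_mul_of_pos_right (by linarith) hNr
      rw [one_mul] at h1
      exact Nat.floor_lt (by positivity) |>.mpr h1
    -- net on the unit sphere of F := EuclideanSpace ℂ (Fin k)
    haveI : Nonempty (Fin k) := ⟨⟨0, hk1⟩⟩
    haveI : Nontrivial (EuclideanSpace ℂ (Fin k)) :=
      inferInstance
    have hd : Module.finrank ℝ (EuclideanSpace ℂ (Fin k)) = 2 * k := by
      rw [(WithLp.linearEquiv 2 ℝ (Fin k → ℂ)).finrank_eq]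
      simp [Module.finrank_pi_fintype, Complex.finrank_real_complex, mul_comm]
    obtain ⟨T, hTsph, hTfin, hTcard, hTnet⟩ :=
      exists_net (E := EuclideanSpace ℂ (Fin k)) (ε := b / 2) (by positivity) (by linarith)
        (K := {u | ‖u‖ = 1}) (fun x hx => le_of_eq hx)
    rw [hd] at hTcard
    have h42 : (4 : ℝ) / (b / 2) = 8 / b := by
      field_simp
      ring
    rw [h42] at hTcard
    -- the net
    set P : Finset (Finset (Fin N)) := Finset.powersetCard k Finset.univ with hP
    have hcardP : ∀ t ∈ P, t.card = k := fun t ht => (Finset.mem_powersetCard.mp ht).2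
    set 𝒩fin : Finset (Fin N → ℂ) :=
      P.attach.biUnion
        (fun tp => hTfin.toFinset.image (embVec tp.1 (hcardP tp.1 tp.2))) with h𝒩
    have hkle : (k : ℝ) ≤ a * N := hkaN
    -- membership of embedded net points in compSet
    have hmem : ∀ (t : Finset (Fin N)) (ht : t.card = k) (m : EuclideanSpace ℂ (Fin k)),
        m ∈ T → embVec t ht m ∈ compSet a b := by
      intro t ht m hm
      have hm1 : ‖m‖ = 1 := hTsph hm
      refine ⟨by rw [euclNorm_embVec, hm1], embVec t ht m, ⟨t, ?_, ?_⟩, ?_⟩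
      · intro i hi
        simp [embVec, hi]
      · simpa [ht] using hkle
      · rw [sub_self]
        have : euclNorm (0 : Fin N → ℂ) = 0 := by simp [euclNorm]
        rw [this]
        linarith
    refine ⟨↑𝒩fin, ?_, Finset.finite_toSet _, ?_, ?_⟩
    · -- subset of compSet
      intro x hx
      rw [Finset.mem_coe, h𝒩, Finset.mem_biUnion] at hx
      obtain ⟨tp, -, hx⟩ := hx
      rw [Finset.mem_image] at hx
      obtain ⟨m, hm, rfl⟩ := hx
      exact hmem _ _ m (hTfin.mem_toFinset.mp hm)
    · -- cardinality bound
      have hbase : (1 : ℝ) ≤ 8 / (a * b) := by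
        rw [le_div_iff₀ (by positivity)]
        nlinarith
      have hcard1 : (𝒩fin.card : ℝ) ≤ (N.choose k : ℝ) * (8 / b) ^ (2 * k) := by
        have h1 : 𝒩fin.card ≤ ∑ tp ∈ P.attach, (hTfin.toFinset.image
            (embVec tp.1 (hcardP tp.1 tp.2))).card := Finset.card_biUnion_le
        have h2 : ∀ tp ∈ P.attach, (hTfin.toFinset.image
            (embVec tp.1 (hcardP tp.1 tp.2))).card ≤ hTfin.toFinset.card :=
          fun tp _ => Finset.card_image_le
        have h3 : 𝒩fin.card ≤ P.card * hTfin.toFinset.card := by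
          calc 𝒩fin.card ≤ _ := h1
            _ ≤ ∑ _tp ∈ P.attach, hTfin.toFinset.card := Finset.sum_le_sum h2
            _ = P.attach.card * hTfin.toFinset.card := by
                rw [Finset.sum_const, smul_eq_mul]
            _ = P.card * hTfin.toFinset.card := by rw [Finset.card_attach]
        have hPcard : P.card = N.choose k := by
          rw [hP, Finset.card_powersetCard, Finset.card_univ, Fintype.card_fin]
        have hTc : (hTfin.toFinset.card : ℝ) ≤ (8 / b) ^ (2 * k) := by
          rwa [← hTfin.coe_toFinset, Set.ncard_coe_finset] at hTcard
        calc (𝒩fin.card : ℝ) ≤ (P.card : ℝ) * hTfin.toFinset.card := by exact_mod_cast h3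
          _ = (N.choose k : ℝ) * hTfin.toFinset.card := by rw [hPcard]
          _ ≤ (N.choose k : ℝ) * (8 / b) ^ (2 * k) := by
              apply mul_le_mul_of_nonneg_left hTc (by positivity)
      have hchoose : (N.choose k : ℝ) ≤ (6 / a) ^ k := by
        have h1 : (N.choose k : ℝ) ≤ (N : ℝ) ^ k / k.factorial :=
          Nat.choose_le_pow_div k N
        have h2 := pow_le_three_pow_mul_factorial k
        have hkpos : (0:ℝ) < k := by exact_mod_cast hk1
        have hNle : (N : ℝ) ≤ 2 * k / a := by
          rw [le_div_iff₀ ha]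
          linarith
        have h3 : ((N : ℝ)) ^ k ≤ (6 / a) ^ k * k.factorial := by
          calc ((N:ℝ)) ^ k ≤ (2 * k / a) ^ k :=
                pow_le_pow_left₀ (by positivity) hNle k
            _ = (6 / a) ^ k * ((k : ℝ) / 3) ^ k := by
                rw [← mul_pow]
                congr 1
                field_simp
                ring
            _ ≤ (6 / a) ^ k * k.factorial := by
                apply mul_le_mul_of_nonneg_left _ (by positivity)
                rw [div_pow, div_le_iff₀ (by positivity)]
                linarith [h2]
        have hf : (0:ℝ) < (k.factorial : ℝ) := by positivity
        rw [le_div_iff₀ hf] at h1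
        exact le_of_mul_le_mul_right (le_trans h1 h3) hf
      have hcomb : (6 / a : ℝ) ^ k * (8 / b) ^ (2 * k) ≤ (8 / (a * b)) ^ (2 * k) := by
        have e1 : ((8:ℝ) / b) ^ (2 * k) = ((8 / b) ^ 2) ^ k := by rw [← pow_mul]
        have e2 : ((8:ℝ) / (a * b)) ^ (2 * k) = ((8 / (a * b)) ^ 2) ^ k := by
          rw [← pow_mul]
        rw [e1, e2, ← mul_pow]
        apply pow_le_pow_left₀ (by positivity)
        have : (6 / a) * (8 / b) ^ 2 = 384 / (a * b ^ 2) := by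
          field_simp
          ring
        rw [this, div_pow]
        rw [div_le_div_iff₀ (by positivity) (by positivity)]
        ring_nf
        nlinarith [sq_nonneg b, sq_nonneg (a*b)]
      have hrpow : ((8:ℝ) / (a * b)) ^ (2 * k) ≤ (8 / (a * b)) ^ (2 * a * (N:ℝ)) := by
        rw [← Real.rpow_natCast (8 / (a*b)) (2 * k)]
        apply Real.rpow_le_rpow_of_exponent_le hbase
        push_cast
        linarith
      rw [Set.ncard_coe_finset]
      calc (𝒩fin.card : ℝ) ≤ (N.choose k : ℝ) * (8 / b) ^ (2 * k) := hcard1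
        _ ≤ (6 / a) ^ k * (8 / b) ^ (2 * k) := by
            apply mul_le_mul_of_nonneg_right hchoose (by positivity)
        _ ≤ (8 / (a * b)) ^ (2 * k) := hcomb
        _ ≤ (8 / (a * b)) ^ (2 * a * (N:ℝ)) := hrpow
    · -- covering
      intro x hx
      obtain ⟨hx1, y', ⟨s, hs0, hscard⟩, hxy'⟩ := hx
      have hsk : s.card ≤ k := Nat.le_floor (by simpa using hscard)
      obtain ⟨t, hst, htk⟩ := Finset.exists_superset_card_eq hsk
        (by simpa using hkN.le)
      have hB : ∑ i ∈ tᶜ, ‖x i‖ ^ 2 ≤ b ^ 2 := by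
        have hsub : tᶜ ⊆ sᶜ := by
          intro i hi
          simp only [Finset.mem_compl] at *
          exact fun hmm => hi (hst hmm)
        calc ∑ i ∈ tᶜ, ‖x i‖ ^ 2 ≤ ∑ i ∈ sᶜ, ‖x i‖ ^ 2 :=
              Finset.sum_le_sum_of_subset_of_nonneg hsub (fun i _ _ => by positivity)
          _ = ∑ i ∈ sᶜ, ‖(x - y') i‖ ^ 2 := by
              apply Finset.sum_congr rfl
              intro i hi
              rw [Finset.mem_compl] at hi
              rw [Pi.sub_apply, hs0 i hi, sub_zero]
          _ ≤ ∑ i, ‖(x - y') i‖ ^ 2 :=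
              Finset.sum_le_sum_of_subset_of_nonneg (Finset.subset_univ _)
                (fun i _ _ => by positivity)
          _ = euclNorm (x - y') ^ 2 := (euclNorm_sq _).symm
          _ ≤ b ^ 2 := pow_le_pow_left₀ (euclNorm_nonneg _) hxy' 2
      obtain ⟨m, hmT, hdist⟩ := cover_aux hb hb8 T hTnet t htk x hx1 hB
      refine ⟨embVec t htk m, ?_, hdist⟩
      have htP : t ∈ P := Finset.mem_powersetCard.mpr ⟨Finset.subset_univ t, htk⟩
      rw [Finset.mem_coe, h𝒩, Finset.mem_biUnion]
      refine ⟨⟨t, htP⟩, Finset.mem_attach _ _, ?_⟩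
      rw [Finset.mem_image]
      exact ⟨m, hTfin.mem_toFinset.mpr hmT, rfl⟩
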